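/- arXiv:2205.14571 — 6 statements merged into one kernel-verified Lean document; each statement's English description precedes it below -/
import Mathlib

section
/- (Simulation lemma, finite-horizon.) Let S be a finite state space, 𝒜 a finite action set, H ∈ ℕ a horizon, and d₀ an initial distribution on S. For any policy π, any two transition models P and P', and any reward r, the values satisfy the exact identity: V^π_{P,r} − V^π_{P',r} = Σ_{h=0}^{H−1} Σ_{(s,a)∈S×𝒜} d^π_{P';h}(s,a) · Σ_{s'∈S} (P_h(s'|s,a) − P'_h(s'|s,a)) · V^π_{P,r;h+1}(s'). -/
/-!
Simulation lemma (finite-horizon): for any policy `π`, transition models `P, P'`,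
and reward `r`,
`V^π_{P,r} − V^π_{P',r} = Σ_{h<H} Σ_{(s,a)} d^π_{P';h}(s,a) ·
  Σ_{s'} (P_h(s'|s,a) − P'_h(s'|s,a)) · V^π_{P,r;h+1}(s')`.
-/

noncomputable section

open Finset

/-- `p` is a probability distribution on the finite type `X`. -/
def IsDist {X : Type*} [Fintype X] (p : X → ℝ) : Prop :=
  (∀ x, 0 ≤ p x) ∧ (∑ x, p x) = 1

variable {S Act : Type*} [Fintype S] [Fintype Act]

/-- Occupancy measure `d^π_{P;h}(s,a)`: the probability that, executing the policy `π`
in the transition model `P` starting from `d0`, the state-action pair at step `h`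
is `(s,a)`. -/
def occ (d0 : S → ℝ) (π : ℕ → S → Act → ℝ) (P : ℕ → S → Act → S → ℝ) :
    ℕ → S → Act → ℝ
  | 0 => fun s a => d0 s * π 0 s a
  | h + 1 => fun s' a' => (∑ s, ∑ a, occ d0 π P h s a * P h s a s') * π (h + 1) s' a'

/-- `valAux π P r n h s` is the value function `V^π_{P,r;h}(s)` when there are `n`
steps remaining (so the horizon is `n + h`); defined by backwards recursion with
`valAux π P r 0 h = 0`. In particular `V^π_{P,r;h} = valAux π P r (H - h) h`. -/
def valAux (π : ℕ → S → Act → ℝ) (P : ℕ → S → Act → S → ℝ) (r : ℕ → S → Act → ℝ) :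
    ℕ → ℕ → S → ℝ
  | 0, _ => fun _ => 0
  | n + 1, h => fun s => ∑ a, π h s a *
      (r h s a + ∑ s', P h s a s' * valAux π P r n (h + 1) s')

/-- Forward state-distribution propagation under `P'`, starting with `μ` at step `h`. -/
def stProp (π : ℕ → S → Act → ℝ) (P' : ℕ → S → Act → S → ℝ) :
    ℕ → (S → ℝ) → ℕ → S → ℝ
  | _, μ, 0 => μ
  | h, μ, k + 1 =>
      stProp π P' (h + 1) (fun s' => ∑ s, ∑ a, μ s * π h s a * P' h s a s') k

lemma stProp_succ (π : ℕ → S → Act → ℝ) (P' : ℕ → S → Act → S → ℝ) :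
    ∀ (k h : ℕ) (μ : S → ℝ), stProp π P' h μ (k + 1)
      = fun s' => ∑ s, ∑ a, stProp π P' h μ k s * π (h + k) s a * P' (h + k) s a s' := by
  intro k
  induction k with
  | zero => intro h μ; simp [stProp]
  | succ k ih =>
      intro h μ
      show stProp π P' (h+1) _ (k+1) = _
      rw [ih]
      simp only [show h + 1 + k = h + (k + 1) from by omega]
      rfl

lemma occ_eq (d0 : S → ℝ) (π : ℕ → S → Act → ℝ) (P' : ℕ → S → Act → S → ℝ) :
    ∀ h s a, occ d0 π P' h s a = stProp π P' 0 d0 h s * π h s a := by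
  intro h
  induction h with
  | zero => intro s a; rfl
  | succ h ih =>
      intro s' a'
      show (∑ s, ∑ a, occ d0 π P' h s a * P' h s a s') * π (h + 1) s' a' = _
      rw [stProp_succ]
      simp only [Nat.zero_add]
      congr 1
      exact Finset.sum_congr rfl fun s _ => Finset.sum_congr rfl fun a _ => by rw [ih]

lemma main_lemma (π : ℕ → S → Act → ℝ) (P P' : ℕ → S → Act → S → ℝ)
    (r : ℕ → S → Act → ℝ) :
    ∀ (n h : ℕ) (μ : S → ℝ),
    (∑ s, μ s * valAux π P r n h s) - (∑ s, μ s * valAux π P' r n h s)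
      = ∑ k ∈ Finset.range n, ∑ s, ∑ a, (stProp π P' h μ k s * π (h + k) s a) *
          (∑ s', (P (h + k) s a s' - P' (h + k) s a s')
            * valAux π P r (n - (k + 1)) (h + k + 1) s') := by
  intro n
  induction n with
  | zero => intro h μ; simp [valAux]
  | succ n ih =>
      intro h μ
      set VP : S → ℝ := valAux π P r n (h + 1) with hVP
      set VP' : S → ℝ := valAux π P' r n (h + 1) with hVP'
      set μ' : S → ℝ := fun s' => ∑ s, ∑ a, μ s * π h s a * P' h s a s' with hμ'
      set R : ℝ := ∑ s, ∑ a, μ s * (π h s a * r h s a) with hR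
      set A : ℝ := ∑ s, ∑ a, ∑ s', μ s * (π h s a * (P h s a s' * VP s')) with hA
      set B : ℝ := ∑ s, ∑ a, ∑ s', μ s * (π h s a * (P' h s a s' * VP' s')) with hB
      set C : ℝ := ∑ s, ∑ a, ∑ s', μ s * (π h s a * (P' h s a s' * VP s')) with hC
      have expand : ∀ (Q : ℕ → S → Act → S → ℝ) (W : S → ℝ),
          (∑ s, μ s * (∑ a, π h s a * (r h s a + ∑ s', Q h s a s' * W s')))
          = R + ∑ s, ∑ a, ∑ s', μ s * (π h s a * (Q h s a s' * W s')) := by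
        intro Q W
        simp only [mul_add, Finset.mul_sum, Finset.sum_add_distrib, hR]
      have hL : (∑ s, μ s * valAux π P r (n+1) h s)
          - (∑ s, μ s * valAux π P' r (n+1) h s) = A - B := by
        show (∑ s, μ s * (∑ a, π h s a * (r h s a + ∑ s', P h s a s' * VP s')))
          - (∑ s, μ s * (∑ a, π h s a * (r h s a + ∑ s', P' h s a s' * VP' s'))) = A - B
        rw [expand P VP, expand P' VP', hA, hB]; ring
      have h1 : (∑ s, ∑ a, (μ s * π h s a) *
          (∑ s', (P h s a s' - P' h s a s') * VP s')) = A - C := by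
        rw [hA, hC, ← Finset.sum_sub_distrib]
        refine Finset.sum_congr rfl fun s _ => ?_
        rw [← Finset.sum_sub_distrib]
        refine Finset.sum_congr rfl fun a _ => ?_
        rw [← Finset.sum_sub_distrib, Finset.mul_sum]
        exact Finset.sum_congr rfl fun s' _ => by ring
      have h2 : ∀ (W : S → ℝ), (∑ s', μ' s' * W s')
          = ∑ s, ∑ a, ∑ s', μ s * (π h s a * (P' h s a s' * W s')) := by
        intro W
        simp only [hμ', Finset.sum_mul]
        rw [Finset.sum_comm]
        refine Finset.sum_congr rfl fun s _ => ?_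
        rw [Finset.sum_comm]
        exact Finset.sum_congr rfl fun a _ => Finset.sum_congr rfl fun s' _ => by ring
      have hrec : ∀ k, k ∈ Finset.range n →
          (∑ s, ∑ a, (stProp π P' (h+1) μ' k s * π (h + 1 + k) s a) *
            (∑ s', (P (h+1+k) s a s' - P' (h+1+k) s a s')
              * valAux π P r (n - (k + 1)) (h + 1 + k + 1) s'))
          = ∑ s, ∑ a, (stProp π P' h μ (k+1) s * π (h + (k+1)) s a) *
            (∑ s', (P (h+(k+1)) s a s' - P' (h+(k+1)) s a s')
              * valAux π P r (n + 1 - (k + 1 + 1)) (h + (k+1) + 1) s') := by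
        intro k _
        simp only [show h + 1 + k = h + (k + 1) from by omega,
          show n + 1 - (k + 1 + 1) = n - (k + 1) from by omega]
        rfl
      rw [hL, Finset.sum_range_succ', Finset.sum_congr rfl hrec |>.symm]
      have h0 : (∑ s, ∑ a, (stProp π P' h μ 0 s * π (h + 0) s a) *
          (∑ s', (P (h+0) s a s' - P' (h+0) s a s')
            * valAux π P r (n + 1 - (0 + 1)) (h + 0 + 1) s'))
          = A - C := by
        simp only [Nat.add_zero, Nat.add_sub_cancel, stProp]
        exact h1
      rw [h0, ← ih (h+1) μ']
      have hCB : (∑ s, μ' s * VP s) - (∑ s, μ' s * VP' s) = C - B := by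
        rw [h2 VP, h2 VP', hB, hC]
      show A - B = _ + (A - C)
      rw [hCB]; ring


/-- **Simulation lemma.** -/
theorem simulation_lemma (H : ℕ)
    (d0 : S → ℝ) (hd0 : IsDist d0)
    (π : ℕ → S → Act → ℝ) (hπ : ∀ h s, IsDist (π h s))
    (P P' : ℕ → S → Act → S → ℝ)
    (hP : ∀ h s a, IsDist (P h s a)) (hP' : ∀ h s a, IsDist (P' h s a))
    (r : ℕ → S → Act → ℝ) :
    (∑ s, d0 s * valAux π P r H 0 s) - (∑ s, d0 s * valAux π P' r H 0 s)
      = ∑ h ∈ Finset.range H, ∑ s, ∑ a, occ d0 π P' h s a *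
          (∑ s', (P h s a s' - P' h s a s') * valAux π P r (H - (h + 1)) (h + 1) s') := by
  rw [main_lemma π P P' r H 0 d0]
  refine Finset.sum_congr rfl fun h _ =>
    Finset.sum_congr rfl fun s _ => Finset.sum_congr rfl fun a _ => ?_
  rw [occ_eq]
  simp [Nat.zero_add]
end
end

section
/- (Total-variation propagation of occupancy distributions.) Let S be a finite state space, 𝒜 a finite action set, H ∈ ℕ, and d₀ an initial distribution on S. Let P and P̂ be two transition models and suppose there exist ε_0,…,ε_{H−1} ≥ 0 such that for every policy π and every t ∈ {0,…,H−1}: Σ_{(s,a)} d^π_{P;t}(s,a) · ‖P̂_t(·|s,a) − P_t(·|s,a)‖_TV ≤ ε_t. Then for every policy π and every h ∈ {0,…,H−1}: Σ_{(s,a)} |d^π_{P̂;h}(s,a) − d^π_{P;h}(s,a)| ≤ Σ_{t=0}^{h−1} ε_t, where the sum on the right is empty (equal to 0) when h = 0. -/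
/-! Total-variation propagation of occupancy distributions. -/

noncomputable section

open Finset

variable {S Act : Type*} [Fintype S] [Fintype Act]

lemma occ_nonneg (d0 : S → ℝ) (hd0 : ∀ s, 0 ≤ d0 s)
    (π : ℕ → S → Act → ℝ) (hπ : ∀ h s a, 0 ≤ π h s a)
    (P : ℕ → S → Act → S → ℝ) (hP : ∀ h s a s', 0 ≤ P h s a s') :
    ∀ h s a, 0 ≤ occ d0 π P h s a := by
  intro h
  induction h with
  | zero => intro s a; exact mul_nonneg (hd0 s) (hπ 0 s a)
  | succ h ih =>
    intro s' a'
    exact mul_nonneg (Finset.sum_nonneg fun s _ => Finset.sum_nonneg fun a _ =>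
      mul_nonneg (ih s a) (hP h s a s')) (hπ _ _ _)

/-- **Total-variation propagation of occupancy distributions.**
If for every policy the expected (under the `P`-occupancy at step `t`) total-variation
distance between `P̂_t` and `P_t` is at most `ε t`, then for every policy `π` and
step `h < H`, the ℓ₁ distance between the step-`h` occupancies of `π` under `P̂`
and under `P` is at most `Σ_{t<h} ε t`. -/
theorem tv_occupancy_propagation (H : ℕ)
    (d0 : S → ℝ) (hd0 : IsDist d0)
    (P Phat : ℕ → S → Act → S → ℝ)
    (hP : ∀ h s a, IsDist (P h s a)) (hPhat : ∀ h s a, IsDist (Phat h s a))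
    (ε : ℕ → ℝ) (hε : ∀ t, 0 ≤ ε t)
    (hclose : ∀ (π : ℕ → S → Act → ℝ), (∀ h s, IsDist (π h s)) →
      ∀ t < H, ∑ s, ∑ a, occ d0 π P t s a * (∑ s', |Phat t s a s' - P t s a s'|) ≤ ε t) :
    ∀ (π : ℕ → S → Act → ℝ), (∀ h s, IsDist (π h s)) →
      ∀ h < H, ∑ s, ∑ a, |occ d0 π Phat h s a - occ d0 π P h s a|
        ≤ ∑ t ∈ Finset.range h, ε t := by
  intro π hπ h
  have hπn : ∀ h s a, 0 ≤ π h s a := fun h s => (hπ h s).1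
  have hπs : ∀ h s, ∑ a, π h s a = 1 := fun h s => (hπ h s).2
  have hoccP : ∀ h s a, 0 ≤ occ d0 π P h s a :=
    occ_nonneg d0 hd0.1 π hπn P (fun h s a s' => (hP h s a).1 s')
  induction h with
  | zero => intro _; simp [occ]
  | succ h ih =>
    intro hH
    have hh : h < H := Nat.lt_of_succ_lt hH
    have IH := ih hh
    rw [Finset.sum_range_succ]
    set f : S → ℝ := fun s' => ∑ s, ∑ a, occ d0 π Phat h s a * Phat h s a s' with hf
    set g : S → ℝ := fun s' => ∑ s, ∑ a, occ d0 π P h s a * P h s a s' with hg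
    have step1 : ∑ s', ∑ a', |occ d0 π Phat (h+1) s' a' - occ d0 π P (h+1) s' a'|
        = ∑ s', |f s' - g s'| := by
      refine Finset.sum_congr rfl fun s' _ => ?_
      have key : ∀ a' : Act, |occ d0 π Phat (h+1) s' a' - occ d0 π P (h+1) s' a'|
          = |f s' - g s'| * π (h+1) s' a' := by
        intro a'
        show |f s' * π (h+1) s' a' - g s' * π (h+1) s' a'| = _
        rw [← sub_mul, abs_mul, abs_of_nonneg (hπn _ _ _)]
      rw [Finset.sum_congr rfl fun a' _ => key a', ← Finset.mul_sum, hπs, mul_one]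
    rw [step1]
    have step2 : ∀ s' : S, |f s' - g s'| ≤
        ∑ s, ∑ a, (|occ d0 π Phat h s a - occ d0 π P h s a| * Phat h s a s'
          + occ d0 π P h s a * |Phat h s a s' - P h s a s'|) := by
      intro s'
      have heq : f s' - g s' = ∑ s, ∑ a,
          ((occ d0 π Phat h s a - occ d0 π P h s a) * Phat h s a s'
            + occ d0 π P h s a * (Phat h s a s' - P h s a s')) := by
        rw [hf, hg, ← Finset.sum_sub_distrib]
        refine Finset.sum_congr rfl fun s _ => ?_
        rw [← Finset.sum_sub_distrib]
        refine Finset.sum_congr rfl fun a _ => ?_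
        ring
      rw [heq]
      refine (Finset.abs_sum_le_sum_abs _ _).trans ?_
      refine Finset.sum_le_sum fun s _ => ?_
      refine (Finset.abs_sum_le_sum_abs _ _).trans ?_
      refine Finset.sum_le_sum fun a _ => ?_
      refine (abs_add_le _ _).trans (le_of_eq ?_)
      rw [abs_mul, abs_mul, abs_of_nonneg ((hPhat h s a).1 s'),
        abs_of_nonneg (hoccP h s a)]
    calc ∑ s', |f s' - g s'|
        ≤ ∑ s', ∑ s, ∑ a, (|occ d0 π Phat h s a - occ d0 π P h s a| * Phat h s a s'
            + occ d0 π P h s a * |Phat h s a s' - P h s a s'|) :=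
          Finset.sum_le_sum fun s' _ => step2 s'
      _ = ∑ s, ∑ a, (|occ d0 π Phat h s a - occ d0 π P h s a|
            + occ d0 π P h s a * (∑ s', |Phat h s a s' - P h s a s'|)) := by
          rw [Finset.sum_comm]
          refine Finset.sum_congr rfl fun s _ => ?_
          rw [Finset.sum_comm]
          refine Finset.sum_congr rfl fun a _ => ?_
          rw [Finset.sum_add_distrib, ← Finset.mul_sum, ← Finset.mul_sum,
            (hPhat h s a).2, mul_one]
      _ = (∑ s, ∑ a, |occ d0 π Phat h s a - occ d0 π P h s a|)
            + ∑ s, ∑ a, occ d0 π P h s a * (∑ s', |Phat h s a s' - P h s a s'|) := by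
          rw [← Finset.sum_add_distrib]
          exact Finset.sum_congr rfl fun s _ => Finset.sum_add_distrib
      _ ≤ (∑ t ∈ Finset.range h, ε t) + ε h :=
          add_le_add IH (hclose π hπ h hh)
end
end

section
/- (One-step back lemma for low-rank MDPs.) Let S be a finite state space, 𝒜 a finite action set of size A, H ∈ ℕ, d₀ an initial distribution on S, and d ∈ ℕ. Suppose the transition model P is low rank: P_h(s'|s,a) = ⟨φ_h(s,a), μ_h(s')⟩ with φ_h : S×𝒜 → ℝ^d and μ_h : S → ℝ^d satisfying ‖Σ_{s'} g(s') μ_h(s')‖₂ ≤ √d for every g : S → [−1,1]. Let ν be any probability distribution on S×𝒜 (playing the role of the step-h occupancy of a mixture policy ρ), let n ≥ 1 and λ > 0, set Σ_h := n · Σ_{(s,a)} ν(s,a) φ_h(s,a)φ_h(s,a)ᵀ + λI, and let ν^{+1} be the distribution on S×𝒜 given by ν^{+1}(s',a') := (1/A) Σ_{(s,a)} ν(s,a) P_h(s'|s,a). Then for every g : S×𝒜 → ℝ, every policy π, and every h ∈ {0,…,H−2}: E_{π,P}[g(s_{h+1},a_{h+1})] ≤ E_{π,P}[‖φ_h(s_h,a_h)‖_{Σ_h^{-1}}]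 · √( n·A·E_{(s,a)∼ν^{+1}}[g(s,a)²] + λ·d·(max_{(s,a)}|g(s,a)|)² ), where ‖v‖_M := √(vᵀMv) and E_{π,P} is the expectation over the trajectory generated by executing π in P from d₀. -/
/-! One-step back lemma for low-rank MDPs. -/

noncomputable section

open Finset

variable {S Act : Type*} [Fintype S] [Fintype Act]

open Matrix

/- ## auxiliary lemmas -/

lemma osb_sum_mulVec {d : ℕ} {S : Type*} [Fintype S] (F : S → Matrix (Fin d) (Fin d) ℝ)
    (x : Fin d → ℝ) : (∑ s, F s) *ᵥ x = ∑ s, F s *ᵥ x := by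
  ext i
  simp only [Matrix.mulVec, dotProduct, Matrix.sum_apply, Finset.sum_apply,
    Finset.sum_mul]
  exact Finset.sum_comm

lemma osb_dotProduct_sum {d : ℕ} {S : Type*} [Fintype S] (x : Fin d → ℝ) (f : S → Fin d → ℝ) :
    x ⬝ᵥ (∑ s, f s) = ∑ s, x ⬝ᵥ f s := by
  simp only [dotProduct, Finset.sum_apply, Finset.mul_sum]
  exact Finset.sum_comm

lemma osb_vecMulVec_mulVec {d : ℕ} (u : Fin d → ℝ) (x : Fin d → ℝ) :
    vecMulVec u u *ᵥ x = (u ⬝ᵥ x) • u := by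
  ext i
  simp only [Matrix.mulVec, dotProduct, Matrix.vecMulVec_apply, Pi.smul_apply,
    smul_eq_mul, Finset.mul_sum, Finset.sum_mul]
  exact Finset.sum_congr rfl fun j _ => by ring

/-- Quadratic form of the regularized design matrix. -/
lemma osb_quad_form {d : ℕ} {S A : Type*} [Fintype S] [Fintype A] (nr : ℝ) (ν : S → A → ℝ)
    (φ : S → A → Fin d → ℝ) (lam : ℝ) (x : Fin d → ℝ) :
    x ⬝ᵥ ((nr • (∑ s, ∑ a, ν s a • vecMulVec (φ s a) (φ s a))
        + lam • (1 : Matrix (Fin d) (Fin d) ℝ)) *ᵥ x)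
      = nr * (∑ s, ∑ a, ν s a * (φ s a ⬝ᵥ x) ^ 2) + lam * (x ⬝ᵥ x) := by
  rw [add_mulVec, smul_mulVec, smul_mulVec, one_mulVec, dotProduct_add,
    dotProduct_smul, dotProduct_smul, osb_sum_mulVec, smul_eq_mul, smul_eq_mul]
  congr 1
  congr 1
  rw [osb_dotProduct_sum]
  refine Finset.sum_congr rfl fun s _ => ?_
  rw [osb_sum_mulVec, osb_dotProduct_sum]
  refine Finset.sum_congr rfl fun a _ => ?_
  rw [smul_mulVec, osb_vecMulVec_mulVec, dotProduct_smul, dotProduct_smul,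
    smul_eq_mul, smul_eq_mul, dotProduct_comm]
  ring

/-- Cauchy–Schwarz for a symmetric positive semidefinite matrix bilinear form. -/
lemma osb_cs_psd {d : ℕ} {M : Matrix (Fin d) (Fin d) ℝ} (hsym : Mᵀ = M)
    (hpsd : ∀ v : Fin d → ℝ, 0 ≤ v ⬝ᵥ M *ᵥ v) (u v : Fin d → ℝ) :
    (u ⬝ᵥ M *ᵥ v) ^ 2 ≤ (u ⬝ᵥ M *ᵥ u) * (v ⬝ᵥ M *ᵥ v) := by
  have hswap : ∀ a b : Fin d → ℝ, a ⬝ᵥ M *ᵥ b = b ⬝ᵥ M *ᵥ a := by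
    intro a b
    rw [dotProduct_mulVec, dotProduct_comm, ← mulVec_transpose, hsym]
  have hq : ∀ t : ℝ, 0 ≤ (v ⬝ᵥ M *ᵥ v) * (t * t) + (2 * (u ⬝ᵥ M *ᵥ v)) * t + (u ⬝ᵥ M *ᵥ u) := by
    intro t
    have h0 := hpsd (u + t • v)
    have hexp : (u + t • v) ⬝ᵥ M *ᵥ (u + t • v)
        = (v ⬝ᵥ M *ᵥ v) * (t * t) + (2 * (u ⬝ᵥ M *ᵥ v)) * t + (u ⬝ᵥ M *ᵥ u) := by
      rw [mulVec_add, dotProduct_add, add_dotProduct, add_dotProduct,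
        mulVec_smul, dotProduct_smul, smul_dotProduct, smul_dotProduct,
        dotProduct_smul, hswap v u]
      simp only [smul_eq_mul]
      ring
    rw [hexp] at h0
    exact h0
  have hd := discrim_le_zero hq
  rw [discrim] at hd
  nlinarith [hd]

/-- The regularized design matrix is positive definite. -/
lemma osb_posdef {d : ℕ} {S A : Type*} [Fintype S] [Fintype A] (nr : ℝ) (hnr : 0 ≤ nr)
    (ν : S → A → ℝ) (hν : ∀ s a, 0 ≤ ν s a)
    (φ : S → A → Fin d → ℝ) (lam : ℝ) (hlam : 0 < lam) :
    (nr • (∑ s, ∑ a, ν s a • vecMulVec (φ s a) (φ s a))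
        + lam • (1 : Matrix (Fin d) (Fin d) ℝ)).PosDef := by
  rw [posDef_iff_dotProduct_mulVec]
  constructor
  · show _ = _
    ext i j
    simp only [conjTranspose_apply, Matrix.add_apply, Matrix.smul_apply, Matrix.sum_apply,
      Matrix.one_apply, vecMulVec_apply, smul_eq_mul, star_trivial]
    have hite : (if j = i then (1:ℝ) else 0) = if i = j then 1 else 0 := by
      by_cases hij : i = j <;> simp [hij, Ne.symm]
    rw [hite]
    congr 2
    exact Finset.sum_congr rfl fun s _ => Finset.sum_congr rfl fun a _ => by ring
  · intro x hx
    simp only [star_trivial]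
    rw [osb_quad_form]
    have h1 : 0 ≤ nr * (∑ s, ∑ a, ν s a * (φ s a ⬝ᵥ x) ^ 2) :=
      mul_nonneg hnr (Finset.sum_nonneg fun s _ => Finset.sum_nonneg fun a _ =>
        mul_nonneg (hν s a) (sq_nonneg _))
    have hnn : 0 ≤ x ⬝ᵥ x := Finset.sum_nonneg fun i _ => mul_self_nonneg _
    have h2 : 0 < x ⬝ᵥ x := by
      rcases hnn.lt_or_eq with h | h
      · exact h
      · exact absurd (dotProduct_self_eq_zero.mp h.symm) hx
    nlinarith [mul_pos hlam h2]


/-- **One-step back lemma for low-rank MDPs.**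
Suppose `P_h(s'|s,a) = ⟨φ_h(s,a), μ_h(s')⟩` is low rank of dimension `d` with the
normalization `‖Σ_{s'} g(s') μ_h(s')‖₂ ≤ √d` for every `g : S → [−1,1]`.  Let `ν` be a
distribution on `S × Act` and `Σ_h := n · Σ_{(s,a)} ν(s,a) φ_h(s,a)φ_h(s,a)ᵀ + λ I`,
and let `ν⁺¹(s',a') := (1/A) Σ_{(s,a)} ν(s,a) P_h(s'|s,a)`.  Then for every
`g : S × Act → ℝ`, every policy `π` and every `h ∈ {0,…,H−2}`:
`E_{π,P}[g(s_{h+1},a_{h+1})] ≤ E_{π,P}[‖φ_h(s_h,a_h)‖_{Σ_h⁻¹}] ·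
  √(n A E_{ν⁺¹}[g²] + λ d (max |g|)²)`. -/
theorem one_step_back [Nonempty S] [Nonempty Act] (d H : ℕ)
    (d0 : S → ℝ) (hd0 : IsDist d0)
    (P : ℕ → S → Act → S → ℝ) (hP : ∀ h s a, IsDist (P h s a))
    (φ : ℕ → S → Act → Fin d → ℝ) (μ : ℕ → S → Fin d → ℝ)
    (hlow : ∀ h s a s', P h s a s' = ∑ i, φ h s a i * μ h s' i)
    (hμ : ∀ h (g : S → ℝ), (∀ s', -1 ≤ g s' ∧ g s' ≤ 1) →
      Real.sqrt (∑ i, (∑ s', g s' * μ h s' i) ^ 2) ≤ Real.sqrt d)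
    (ν : S → Act → ℝ)
    (hν : (∀ s a, 0 ≤ ν s a) ∧ (∑ s, ∑ a, ν s a) = 1)
    (n : ℕ) (hn : 1 ≤ n) (lam : ℝ) (hlam : 0 < lam)
    (g : S → Act → ℝ)
    (π : ℕ → S → Act → ℝ) (hπ : ∀ h s, IsDist (π h s))
    (h : ℕ) (hh : h + 2 ≤ H) :
    (∑ s, ∑ a, occ d0 π P (h + 1) s a * g s a)
      ≤ (∑ s, ∑ a, occ d0 π P h s a *
            Real.sqrt (φ h s a ⬝ᵥ
              (((n : ℝ) • (∑ s', ∑ a', ν s' a' •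
                    vecMulVec (φ h s' a') (φ h s' a'))
                  + lam • (1 : Matrix (Fin d) (Fin d) ℝ))⁻¹).mulVec (φ h s a)))
          * Real.sqrt ((n : ℝ) * (Fintype.card Act : ℝ) *
                (∑ s', ∑ a', ((1 / (Fintype.card Act : ℝ)) *
                    ∑ s, ∑ a, ν s a * P h s a s') * g s' a' ^ 2)
              + lam * (d : ℝ) *
                (Finset.univ.sup' Finset.univ_nonempty
                  (fun p : S × Act => |g p.1 p.2|)) ^ 2) := by
  obtain ⟨hνnn, hνsum⟩ := hν
  set Sg : Matrix (Fin d) (Fin d) ℝ :=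
    (n : ℝ) • (∑ s', ∑ a', ν s' a' • vecMulVec (φ h s' a') (φ h s' a'))
      + lam • (1 : Matrix (Fin d) (Fin d) ℝ) with hSg
  set f : S → ℝ := fun s' => ∑ a', π (h + 1) s' a' * g s' a' with hfdef
  set w : Fin d → ℝ := fun i => ∑ s', f s' * μ h s' i with hwdef
  set G : ℝ := Finset.univ.sup' Finset.univ_nonempty (fun p : S × Act => |g p.1 p.2|) with hGdef
  -- basic facts
  have hGb : ∀ s a, |g s a| ≤ G := fun s a =>
    Finset.le_sup' (f := fun p : S × Act => |g p.1 p.2|) (Finset.mem_univ (s, a))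
  have hGnn : 0 ≤ G := by
    obtain ⟨s⟩ := ‹Nonempty S›
    obtain ⟨a⟩ := ‹Nonempty Act›
    exact le_trans (abs_nonneg _) (hGb s a)
  have hfb : ∀ s', |f s'| ≤ G := by
    intro s'
    calc |f s'| ≤ ∑ a', |π (h + 1) s' a' * g s' a'| := Finset.abs_sum_le_sum_abs _ _
      _ ≤ ∑ a', π (h + 1) s' a' * G := by
          refine Finset.sum_le_sum fun a' _ => ?_
          rw [abs_mul, abs_of_nonneg ((hπ (h + 1) s').1 a')]
          exact mul_le_mul_of_nonneg_left (hGb s' a') ((hπ (h + 1) s').1 a')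
      _ = G := by rw [← Finset.sum_mul, (hπ (h + 1) s').2, one_mul]
  -- positive definiteness
  have hPD : Sg.PosDef := osb_posdef (n : ℝ) (Nat.cast_nonneg n) ν hνnn (φ h) lam hlam
  have hPDinv : Sg⁻¹.PosDef := hPD.inv
  have hdet : IsUnit Sg.det := isUnit_iff_ne_zero.mpr hPD.det_pos.ne'
  have hmulinv : Sg * Sg⁻¹ = 1 := Matrix.mul_nonsing_inv _ hdet
  have hsymSg : Sgᵀ = Sg := by
    have h1 : Sgᴴ = Sg := hPD.1
    have h2 : Sgᵀ = Sgᴴ := by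
      ext i j
      simp [Matrix.conjTranspose_apply]
    rw [h2, h1]
  have hpsdSg : ∀ v : Fin d → ℝ, 0 ≤ v ⬝ᵥ Sg *ᵥ v := by
    intro v
    have := hPD.posSemidef.dotProduct_mulVec_nonneg v
    simpa using this
  have hpsdSginv : ∀ v : Fin d → ℝ, 0 ≤ v ⬝ᵥ Sg⁻¹ *ᵥ v := by
    intro v
    have := hPDinv.posSemidef.dotProduct_mulVec_nonneg v
    simpa using this
  -- φ ⬝ᵥ w = ∑ s', P h s a s' * f s'
  have hφw : ∀ s a, φ h s a ⬝ᵥ w = ∑ s', P h s a s' * f s' := by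
    intro s a
    simp only [dotProduct, hwdef, Finset.mul_sum]
    rw [Finset.sum_comm]
    refine Finset.sum_congr rfl fun s' _ => ?_
    rw [hlow, Finset.sum_mul]
    exact Finset.sum_congr rfl fun i _ => by ring
  -- rewrite of the LHS
  have hLHS : (∑ s, ∑ a, occ d0 π P (h + 1) s a * g s a)
      = ∑ s, ∑ a, occ d0 π P h s a * (φ h s a ⬝ᵥ w) := by
    have step1 : (∑ s', ∑ a', occ d0 π P (h + 1) s' a' * g s' a')
        = ∑ s', (∑ s, ∑ a, occ d0 π P h s a * P h s a s') * f s' := by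
      refine Finset.sum_congr rfl fun s' _ => ?_
      simp only [occ, hfdef, Finset.mul_sum]
      exact Finset.sum_congr rfl fun a' _ => by ring
    rw [step1]
    simp only [Finset.sum_mul]
    rw [Finset.sum_comm]
    refine Finset.sum_congr rfl fun s _ => ?_
    rw [Finset.sum_comm]
    refine Finset.sum_congr rfl fun a _ => ?_
    rw [hφw, Finset.mul_sum]
    exact Finset.sum_congr rfl fun s' _ => by ring
  -- occupancy is nonnegative
  have hoccnn : ∀ k s a, 0 ≤ occ d0 π P k s a := by
    intro k
    induction k with
    | zero => exact fun s a => mul_nonneg (hd0.1 s) ((hπ 0 s).1 a)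
    | succ k ih =>
        intro s' a'
        refine mul_nonneg (Finset.sum_nonneg fun s _ => Finset.sum_nonneg fun a _ =>
          mul_nonneg (ih s a) ((hP k s a).1 s')) ((hπ (k + 1) s').1 a')
  -- the key Cauchy–Schwarz bound per state-action pair
  have hkey : ∀ s a, φ h s a ⬝ᵥ w
      ≤ Real.sqrt (φ h s a ⬝ᵥ Sg⁻¹ *ᵥ φ h s a) * Real.sqrt (w ⬝ᵥ Sg *ᵥ w) := by
    intro s a
    set u : Fin d → ℝ := Sg⁻¹ *ᵥ φ h s a with hu
    have hSgu : Sg *ᵥ u = φ h s a := by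
      rw [hu, Matrix.mulVec_mulVec, hmulinv, Matrix.one_mulVec]
    have hswap : ∀ a' b' : Fin d → ℝ, a' ⬝ᵥ Sg *ᵥ b' = b' ⬝ᵥ Sg *ᵥ a' := by
      intro a' b'
      rw [dotProduct_mulVec, dotProduct_comm, ← mulVec_transpose, hsymSg]
    have hcs := osb_cs_psd hsymSg hpsdSg u w
    have h1 : u ⬝ᵥ Sg *ᵥ w = φ h s a ⬝ᵥ w := by
      rw [hswap, dotProduct_comm, hSgu]
    have h2 : u ⬝ᵥ Sg *ᵥ u = φ h s a ⬝ᵥ Sg⁻¹ *ᵥ φ h s a := by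
      rw [hswap, hSgu, dotProduct_comm]
    rw [h1, h2] at hcs
    calc φ h s a ⬝ᵥ w ≤ |φ h s a ⬝ᵥ w| := le_abs_self _
      _ = Real.sqrt ((φ h s a ⬝ᵥ w) ^ 2) := (Real.sqrt_sq_eq_abs _).symm
      _ ≤ Real.sqrt ((φ h s a ⬝ᵥ Sg⁻¹ *ᵥ φ h s a) * (w ⬝ᵥ Sg *ᵥ w)) := Real.sqrt_le_sqrt hcs
      _ = _ := Real.sqrt_mul (hpsdSginv _) _
  -- bound (φ ⬝ᵥ w)² by the conditional second moment
  have hwP : ∀ s a, (φ h s a ⬝ᵥ w) ^ 2 ≤ ∑ s', P h s a s' * (∑ a', g s' a' ^ 2) := by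
    intro s a
    rw [hφw]
    have step1 : (∑ s', P h s a s' * f s') ^ 2
        ≤ (∑ s', P h s a s') * (∑ s', P h s a s' * f s' ^ 2) :=
      Finset.sum_sq_le_sum_mul_sum_of_sq_eq_mul Finset.univ
        (fun s' _ => (hP h s a).1 s')
        (fun s' _ => mul_nonneg ((hP h s a).1 s') (sq_nonneg _))
        (fun s' _ => by ring)
    rw [(hP h s a).2, one_mul] at step1
    refine step1.trans (Finset.sum_le_sum fun s' _ => ?_)
    refine mul_le_mul_of_nonneg_left ?_ ((hP h s a).1 s')
    have hf1 : f s' ^ 2 ≤ ∑ a', π (h + 1) s' a' * g s' a' ^ 2 := by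
      have hcs2 : (∑ a', π (h + 1) s' a' * g s' a') ^ 2
          ≤ (∑ a', π (h + 1) s' a') * (∑ a', π (h + 1) s' a' * g s' a' ^ 2) :=
        Finset.sum_sq_le_sum_mul_sum_of_sq_eq_mul Finset.univ
          (fun a' _ => (hπ (h + 1) s').1 a')
          (fun a' _ => mul_nonneg ((hπ (h + 1) s').1 a') (sq_nonneg _))
          (fun a' _ => by ring)
      rwa [(hπ (h + 1) s').2, one_mul] at hcs2
    refine hf1.trans (Finset.sum_le_sum fun a' _ => ?_)
    have hπ1 : π (h + 1) s' a' ≤ 1 := by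
      have := Finset.single_le_sum (f := fun a' => π (h + 1) s' a')
        (fun a _ => (hπ (h + 1) s').1 a) (Finset.mem_univ a')
      rw [(hπ (h + 1) s').2] at this
      exact this
    nlinarith [sq_nonneg (g s' a'), (hπ (h + 1) s').1 a']
  -- bound the Euclidean norm of w
  have hwnorm : w ⬝ᵥ w ≤ (d : ℝ) * G ^ 2 := by
    have hww : w ⬝ᵥ w = ∑ i, w i ^ 2 := by
      simp [dotProduct, sq]
    by_cases hG0 : G = 0
    · have hg0 : ∀ s a, g s a = 0 := fun s a =>
        abs_eq_zero.mp (le_antisymm (hG0 ▸ hGb s a) (abs_nonneg _))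
      have hf0 : ∀ s', f s' = 0 := by
        intro s'
        simp [hfdef, hg0]
      have hw0 : ∀ i, w i = 0 := by
        intro i
        simp [hwdef, hf0]
      rw [hww]
      simp [hw0, hG0]
    · have hGpos : 0 < G := lt_of_le_of_ne hGnn (Ne.symm hG0)
      have hb := hμ h (fun s' => f s' / G) (fun s' => abs_le.mp (by
        rw [abs_div, abs_of_pos hGpos]
        exact div_le_one_of_le₀ (hfb s') hGnn))
      have hnn1 : 0 ≤ ∑ i, (∑ s', f s' / G * μ h s' i) ^ 2 :=
        Finset.sum_nonneg fun i _ => sq_nonneg _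
      have hsq : ∑ i, (∑ s', f s' / G * μ h s' i) ^ 2 ≤ (d : ℝ) := by
        calc ∑ i, (∑ s', f s' / G * μ h s' i) ^ 2
            = Real.sqrt (∑ i, (∑ s', f s' / G * μ h s' i) ^ 2) ^ 2 :=
              (Real.sq_sqrt hnn1).symm
          _ ≤ Real.sqrt (d : ℝ) ^ 2 := by
              have := pow_le_pow_left₀ (Real.sqrt_nonneg _) hb 2
              exact this
          _ = (d : ℝ) := Real.sq_sqrt (Nat.cast_nonneg d)
      have hident : ∀ i, (∑ s', f s' / G * μ h s' i) = w i / G := by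
        intro i
        rw [hwdef]
        rw [Finset.sum_div]
        exact Finset.sum_congr rfl fun s' _ => by ring
      rw [hww]
      have hsq' : (∑ i, w i ^ 2) / G ^ 2 ≤ (d : ℝ) := by
        have : ∑ i, (w i / G) ^ 2 = (∑ i, w i ^ 2) / G ^ 2 := by
          rw [Finset.sum_div]
          exact Finset.sum_congr rfl fun i _ => by rw [div_pow]
        rw [← this]
        calc ∑ i, (w i / G) ^ 2 = ∑ i, (∑ s', f s' / G * μ h s' i) ^ 2 := by
              exact Finset.sum_congr rfl fun i _ => by rw [hident]
          _ ≤ (d : ℝ) := hsq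
      have hG2 : 0 < G ^ 2 := by positivity
      calc ∑ i, w i ^ 2 = ((∑ i, w i ^ 2) / G ^ 2) * G ^ 2 := by field_simp
        _ ≤ (d : ℝ) * G ^ 2 := mul_le_mul_of_nonneg_right hsq' hG2.le
  -- quadratic form of w
  have hquadw : w ⬝ᵥ Sg *ᵥ w
      = (n : ℝ) * (∑ s, ∑ a, ν s a * (φ h s a ⬝ᵥ w) ^ 2) + lam * (w ⬝ᵥ w) := by
    rw [hSg]
    exact osb_quad_form _ _ _ _ _
  -- energy bound
  have hA0 : (0 : ℝ) < (Fintype.card Act : ℝ) := by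
    have : 0 < Fintype.card Act := Fintype.card_pos
    exact_mod_cast this
  have hswapsum : ∑ s, ∑ a, ν s a * (∑ s', P h s a s' * (∑ a', g s' a' ^ 2))
      = ∑ s', (∑ s, ∑ a, ν s a * P h s a s') * (∑ a', g s' a' ^ 2) := by
    calc ∑ s, ∑ a, ν s a * (∑ s', P h s a s' * (∑ a', g s' a' ^ 2))
        = ∑ s, ∑ a, ∑ s', ν s a * (P h s a s' * (∑ a', g s' a' ^ 2)) := by
          exact Finset.sum_congr rfl fun s _ => Finset.sum_congr rfl fun a _ =>
            Finset.mul_sum _ _ _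
      _ = ∑ s, ∑ s', ∑ a, ν s a * (P h s a s' * (∑ a', g s' a' ^ 2)) := by
          exact Finset.sum_congr rfl fun s _ => Finset.sum_comm
      _ = ∑ s', ∑ s, ∑ a, ν s a * (P h s a s' * (∑ a', g s' a' ^ 2)) := Finset.sum_comm
      _ = ∑ s', (∑ s, ∑ a, ν s a * P h s a s') * (∑ a', g s' a' ^ 2) := by
          refine Finset.sum_congr rfl fun s' _ => ?_
          rw [Finset.sum_mul]
          refine Finset.sum_congr rfl fun s _ => ?_
          rw [Finset.sum_mul]
          exact Finset.sum_congr rfl fun a _ => by ring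
  have hArw : (n : ℝ) * (Fintype.card Act : ℝ) *
        (∑ s', ∑ a', ((1 / (Fintype.card Act : ℝ)) *
            ∑ s, ∑ a, ν s a * P h s a s') * g s' a' ^ 2)
      = (n : ℝ) * ∑ s', (∑ s, ∑ a, ν s a * P h s a s') * (∑ a', g s' a' ^ 2) := by
    have hper : ∀ s', ∑ a', ((1 / (Fintype.card Act : ℝ)) *
          ∑ s, ∑ a, ν s a * P h s a s') * g s' a' ^ 2
        = (1 / (Fintype.card Act : ℝ)) *
            ((∑ s, ∑ a, ν s a * P h s a s') * (∑ a', g s' a' ^ 2)) := by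
      intro s'
      calc ∑ a', ((1 / (Fintype.card Act : ℝ)) *
              ∑ s, ∑ a, ν s a * P h s a s') * g s' a' ^ 2
          = ∑ a', (1 / (Fintype.card Act : ℝ)) *
              ((∑ s, ∑ a, ν s a * P h s a s') * g s' a' ^ 2) :=
            Finset.sum_congr rfl fun a' _ => by ring
        _ = (1 / (Fintype.card Act : ℝ)) *
              ∑ a', (∑ s, ∑ a, ν s a * P h s a s') * g s' a' ^ 2 :=
            (Finset.mul_sum _ _ _).symm
        _ = (1 / (Fintype.card Act : ℝ)) *
              ((∑ s, ∑ a, ν s a * P h s a s') * (∑ a', g s' a' ^ 2)) := by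
            congr 1
            exact (Finset.mul_sum _ _ _).symm
    simp_rw [hper]
    rw [← Finset.mul_sum]
    field_simp
  -- final energy bound
  have hB : w ⬝ᵥ Sg *ᵥ w
      ≤ (n : ℝ) * (Fintype.card Act : ℝ) *
          (∑ s', ∑ a', ((1 / (Fintype.card Act : ℝ)) *
              ∑ s, ∑ a, ν s a * P h s a s') * g s' a' ^ 2)
        + lam * (d : ℝ) * G ^ 2 := by
    rw [hquadw, hArw]
    have t1 : (n : ℝ) * (∑ s, ∑ a, ν s a * (φ h s a ⬝ᵥ w) ^ 2)
        ≤ (n : ℝ) * ∑ s', (∑ s, ∑ a, ν s a * P h s a s') * (∑ a', g s' a' ^ 2) := by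
      refine mul_le_mul_of_nonneg_left ?_ (Nat.cast_nonneg n)
      rw [← hswapsum]
      exact Finset.sum_le_sum fun s _ => Finset.sum_le_sum fun a _ =>
        mul_le_mul_of_nonneg_left (hwP s a) (hνnn s a)
    have t2 : lam * (w ⬝ᵥ w) ≤ lam * (d : ℝ) * G ^ 2 := by
      rw [mul_assoc]
      exact mul_le_mul_of_nonneg_left hwnorm hlam.le
    exact add_le_add t1 t2
  -- final assembly
  rw [hLHS]
  have hsqrtnn : ∀ s a, 0 ≤ Real.sqrt (φ h s a ⬝ᵥ Sg⁻¹ *ᵥ φ h s a) :=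
    fun s a => Real.sqrt_nonneg _
  calc ∑ s, ∑ a, occ d0 π P h s a * (φ h s a ⬝ᵥ w)
      ≤ ∑ s, ∑ a, occ d0 π P h s a *
          (Real.sqrt (φ h s a ⬝ᵥ Sg⁻¹ *ᵥ φ h s a) * Real.sqrt (w ⬝ᵥ Sg *ᵥ w)) :=
        Finset.sum_le_sum fun s _ => Finset.sum_le_sum fun a _ =>
          mul_le_mul_of_nonneg_left (hkey s a) (hoccnn h s a)
    _ = (∑ s, ∑ a, occ d0 π P h s a * Real.sqrt (φ h s a ⬝ᵥ Sg⁻¹ *ᵥ φ h s a))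
          * Real.sqrt (w ⬝ᵥ Sg *ᵥ w) := by
        rw [Finset.sum_mul]
        refine Finset.sum_congr rfl fun s _ => ?_
        rw [Finset.sum_mul]
        exact Finset.sum_congr rfl fun a _ => by ring
    _ ≤ (∑ s, ∑ a, occ d0 π P h s a * Real.sqrt (φ h s a ⬝ᵥ Sg⁻¹ *ᵥ φ h s a))
          * Real.sqrt ((n : ℝ) * (Fintype.card Act : ℝ) *
              (∑ s', ∑ a', ((1 / (Fintype.card Act : ℝ)) *
                  ∑ s, ∑ a, ν s a * P h s a s') * g s' a' ^ 2)
            + lam * (d : ℝ) * G ^ 2) := by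
        refine mul_le_mul_of_nonneg_left (Real.sqrt_le_sqrt hB)
          (Finset.sum_nonneg fun s _ => Finset.sum_nonneg fun a _ =>
            mul_nonneg (hoccnn h s a) (hsqrtnn s a))
end
end

section
/- (Elliptical potential upper bound.) Let d ≥ 1, t ≥ 0, x_1,…,x_t ∈ ℝ^d, λ > 0, and Λ := λ·I + Σ_{i=1}^t x_i x_iᵀ. Then Λ is positive definite (hence invertible) and Σ_{i=1}^t x_iᵀ Λ^{-1} x_i ≤ d. -/
/-! Elliptical potential upper bound. -/

noncomputable section

open Matrix

lemma vecMulVec_posSemidef {d : ℕ} (v : Fin d → ℝ) : (vecMulVec v v).PosSemidef := by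
  rw [posSemidef_iff_dotProduct_mulVec]
  constructor
  · ext i j; simp [vecMulVec_apply, conjTranspose_apply, mul_comm]
  · intro y
    have : star y ⬝ᵥ (vecMulVec v v).mulVec y = (v ⬝ᵥ y) * (v ⬝ᵥ y) := by
      simp [dotProduct, mulVec, vecMulVec_apply, Finset.mul_sum, Finset.sum_mul]
      rw [Finset.sum_comm]
      apply Finset.sum_congr rfl; intro i _
      apply Finset.sum_congr rfl; intro j _
      ring
    rw [this]
    exact mul_self_nonneg _

lemma dot_eq_trace {d : ℕ} (A : Matrix (Fin d) (Fin d) ℝ) (v : Fin d → ℝ) :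
    v ⬝ᵥ A.mulVec v = trace (A * vecMulVec v v) := by
  simp [trace, Matrix.mul_apply, dotProduct, mulVec, vecMulVec_apply, diag, Finset.mul_sum]
  apply Finset.sum_congr rfl; intro i _
  apply Finset.sum_congr rfl; intro j _
  ring

lemma posSemidef_diag_nonneg {d : ℕ} {A : Matrix (Fin d) (Fin d) ℝ}
    (hA : A.PosSemidef) (i : Fin d) : 0 ≤ A i i := by
  have := hA.dotProduct_mulVec_nonneg (Pi.single i 1)
  simpa [dotProduct, mulVec, Pi.single_apply, Finset.sum_ite_eq] using this

/-- **Elliptical potential upper bound.**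
For `x_1,…,x_t ∈ ℝ^d`, `λ > 0` and `Λ := λ·I + Σᵢ xᵢ xᵢᵀ`, the matrix `Λ` is positive
definite (hence invertible) and `Σᵢ xᵢᵀ Λ⁻¹ xᵢ ≤ d`. -/
theorem elliptical_potential
    {d t : ℕ} (hd : 1 ≤ d)
    (x : Fin t → Fin d → ℝ) (lam : ℝ) (hlam : 0 < lam) :
    (lam • (1 : Matrix (Fin d) (Fin d) ℝ) + ∑ i, vecMulVec (x i) (x i)).PosDef ∧
      ∑ i, (x i) ⬝ᵥ
          ((lam • (1 : Matrix (Fin d) (Fin d) ℝ) + ∑ j, vecMulVec (x j) (x j))⁻¹).mulVec (x i)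
        ≤ (d : ℝ) := by
  set S : Matrix (Fin d) (Fin d) ℝ := ∑ j, vecMulVec (x j) (x j) with hS
  set Λ : Matrix (Fin d) (Fin d) ℝ := lam • (1 : Matrix (Fin d) (Fin d) ℝ) + S with hΛ
  have hsum : S.PosSemidef := by
    rw [hS]
    apply Finset.sum_induction
    · exact fun a b ha hb => ha.add hb
    · exact Matrix.PosSemidef.zero
    · exact fun i _ => vecMulVec_posSemidef (x i)
  have hsmul : (lam • (1 : Matrix (Fin d) (Fin d) ℝ)).PosDef := by
    rw [smul_one_eq_diagonal]
    exact Matrix.posDef_diagonal_iff.mpr fun _ => hlam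
  have hP : Λ.PosDef := hsmul.add_posSemidef hsum
  refine ⟨hP, ?_⟩
  have hinv : Λ⁻¹.PosDef := hP.inv
  have hEq : ∑ i, (x i) ⬝ᵥ (Λ⁻¹).mulVec (x i) = trace (Λ⁻¹ * S) := by
    rw [hS, Matrix.mul_sum, trace_sum]
    exact Finset.sum_congr rfl fun i _ => dot_eq_trace _ _
  rw [hEq]
  have hSe : S = Λ - lam • (1 : Matrix (Fin d) (Fin d) ℝ) := by rw [hΛ]; abel
  have hinvΛ : Λ⁻¹ * Λ = 1 := Matrix.nonsing_inv_mul Λ hP.det_pos.ne'.isUnit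
  rw [hSe, Matrix.mul_sub, trace_sub, hinvΛ, trace_one]
  have htr : 0 ≤ trace Λ⁻¹ := by
    rw [trace]
    exact Finset.sum_nonneg fun i _ => posSemidef_diag_nonneg hinv.posSemidef i
  have : trace (Λ⁻¹ * (lam • (1 : Matrix (Fin d) (Fin d) ℝ))) = lam * trace Λ⁻¹ := by
    rw [Matrix.mul_smul, Matrix.mul_one, trace_smul]; rfl
  rw [this]
  simp only [Fintype.card_fin]
  nlinarith
end
end

section
/- (ℓ∞ perturbation bound for the clipped optimistic value class.) Let S be any set, 𝒜 a finite action set, d ≥ 1, and let φ : S×𝒜 → ℝ^d satisfy ‖φ(s,a)‖₂ ≤ 1 for all (s,a). Let r : S×𝒜 → ℝ and M ∈ ℝ. For i ∈ {1,2}, let w_i ∈ ℝ^d, β_i ≥ 0 with β₂ ≤ B, and let Λ_i be a symmetric d×d real matrix with Λ_i ⪰ I (all eigenvalues at least 1); define f_i(s) := min{ max_{a∈𝒜} ( w_iᵀ φ(s,a) + r(s,a) + β_i · √(φ(s,a)ᵀ Λ_i^{-1} φ(s,a)) ), M }. Then for every s ∈ S: |f₁(s) − f₂(s)| ≤ ‖w₁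 − w₂‖₂ + |β₁ − β₂| + B · √( ‖Λ₁^{-1} − Λ₂^{-1}‖ ), where ‖·‖ denotes the operator (spectral) norm on d×d matrices. -/
/-! ℓ∞ perturbation bound for the clipped optimistic value class. -/

noncomputable section

open Matrix Finset

/-- `|√a − √b| ≤ √|a − b|` for nonnegative reals. -/
lemma aux_abs_sqrt_sub_sqrt {a b : ℝ} (ha : 0 ≤ a) (hb : 0 ≤ b) :
    |Real.sqrt a - Real.sqrt b| ≤ Real.sqrt |a - b| := by
  have key : ∀ x y : ℝ, 0 ≤ y → y ≤ x →
      Real.sqrt x - Real.sqrt y ≤ Real.sqrt (x - y) := by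
    intro x y hy hxy
    have hx : 0 ≤ x := hy.trans hxy
    have h1 := Real.sqrt_nonneg (x - y)
    have h2 := Real.sqrt_nonneg y
    have h3 := Real.sq_sqrt (by linarith : (0:ℝ) ≤ x - y)
    have h4 := Real.sq_sqrt hy
    have hmain : Real.sqrt x ≤ Real.sqrt (x - y) + Real.sqrt y := by
      rw [Real.sqrt_le_iff]
      constructor
      · positivity
      · nlinarith [mul_nonneg h1 h2]
    linarith
  rcases le_total b a with h | h
  · rw [abs_of_nonneg (sub_nonneg.mpr (Real.sqrt_le_sqrt h)),
      abs_of_nonneg (by linarith : (0:ℝ) ≤ a - b)]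
    exact key a b hb h
  · rw [abs_of_nonpos (sub_nonpos.mpr (Real.sqrt_le_sqrt h)),
      abs_of_nonpos (by linarith : a - b ≤ 0), neg_sub, neg_sub]
    exact key b a ha h

/-- A uniform pointwise bound transfers to `sup'`. -/
lemma aux_abs_sup'_sub_sup' {α : Type*} (s : Finset α) (hs : s.Nonempty)
    (f g : α → ℝ) {C : ℝ} (h : ∀ a ∈ s, |f a - g a| ≤ C) :
    |s.sup' hs f - s.sup' hs g| ≤ C := by
  rw [abs_sub_le_iff]
  constructor
  · rw [sub_le_iff_le_add]
    refine Finset.sup'_le _ _ fun a ha => ?_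
    have h1 : f a - g a ≤ C := (abs_le.mp (h a ha)).2
    have h2 : g a ≤ s.sup' hs g := Finset.le_sup' g ha
    linarith
  · rw [sub_le_iff_le_add]
    refine Finset.sup'_le _ _ fun a ha => ?_
    have h1 : -(f a - g a) ≤ C := neg_le.mp (abs_le.mp (h a ha)).1
    have h2 : f a ≤ s.sup' hs f := Finset.le_sup' f ha
    linarith

/-- If `Λ - 1` is PSD and `Λ` is symmetric, then `Λ` is positive definite. -/
lemma aux_posDef {d : ℕ} {Λ : Matrix (Fin d) (Fin d) ℝ}
    (hs : Λ.IsSymm) (h : (Λ - 1).PosSemidef) : Λ.PosDef := by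
  refine Matrix.posDef_iff_dotProduct_mulVec.mpr ⟨?_, fun x hx => ?_⟩
  · rw [Matrix.IsHermitian, Matrix.conjTranspose_eq_transpose_of_trivial, hs]
  · have h1 := h.dotProduct_mulVec_nonneg x
    have h2 : (0:ℝ) < x ⬝ᵥ x := by
      have hne : x ⬝ᵥ x ≠ 0 := fun h' => hx (dotProduct_self_eq_zero.mp h')
      have hnn : (0:ℝ) ≤ x ⬝ᵥ x := Finset.sum_nonneg fun i _ => mul_self_nonneg _
      exact hnn.lt_of_ne (Ne.symm hne)
    have heq : star x ⬝ᵥ (Λ - 1) *ᵥ x = star x ⬝ᵥ Λ *ᵥ x - x ⬝ᵥ x := by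
      simp [Matrix.sub_mulVec, dotProduct_sub]
    rw [heq] at h1
    linarith

/-- `φᵀ Λ⁻¹ φ ≤ φᵀ φ` when `Λ` is symmetric with `Λ ⪰ I`. -/
lemma aux_quad_le {d : ℕ} {Λ : Matrix (Fin d) (Fin d) ℝ}
    (hs : Λ.IsSymm) (h : (Λ - 1).PosSemidef) (φ : Fin d → ℝ) :
    φ ⬝ᵥ Λ⁻¹ *ᵥ φ ≤ φ ⬝ᵥ φ := by
  have hpd := aux_posDef hs h
  have hunit : IsUnit Λ.det := hpd.det_pos.ne'.isUnit
  set y : Fin d → ℝ := Λ⁻¹ *ᵥ φ with hy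
  have hφ : Λ *ᵥ y = φ := by
    rw [hy, Matrix.mulVec_mulVec, Matrix.mul_nonsing_inv _ hunit, Matrix.one_mulVec]
  -- φ ⬝ᵥ Λ⁻¹ φ = (Λ y) ⬝ᵥ y and φ ⬝ᵥ φ = (Λ y) ⬝ᵥ (Λ y)
  have e1 : φ ⬝ᵥ Λ⁻¹ *ᵥ φ = (Λ *ᵥ y) ⬝ᵥ y := by rw [hφ, ← hy]
  have e2 : φ ⬝ᵥ φ = (Λ *ᵥ y) ⬝ᵥ (Λ *ᵥ y) := by rw [hφ]
  rw [e1, e2]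
  have hΛt : Λᵀ = Λ := hs
  have key : (Λ *ᵥ y) ⬝ᵥ (Λ *ᵥ y) - (Λ *ᵥ y) ⬝ᵥ y
      = ((Λ - 1) *ᵥ y) ⬝ᵥ ((Λ - 1) *ᵥ y) + y ⬝ᵥ ((Λ - 1) *ᵥ y) := by
    simp only [Matrix.sub_mulVec, Matrix.one_mulVec, dotProduct_sub, sub_dotProduct]
    have comm1 : (Λ *ᵥ y) ⬝ᵥ y = y ⬝ᵥ (Λ *ᵥ y) := dotProduct_comm _ _
    have comm2 : (Λ *ᵥ y) ⬝ᵥ (Λ *ᵥ y) = y ⬝ᵥ (Λ *ᵥ (Λ *ᵥ y)) := by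
      rw [dotProduct_comm, Matrix.dotProduct_mulVec, ← Matrix.mulVec_transpose, hΛt]
      exact dotProduct_comm _ _
    rw [comm1, comm2]
    ring
  have hpsd1 : 0 ≤ ((Λ - 1) *ᵥ y) ⬝ᵥ ((Λ - 1) *ᵥ y) :=
    Finset.sum_nonneg fun i _ => mul_self_nonneg _
  have hpsd2 : 0 ≤ y ⬝ᵥ ((Λ - 1) *ᵥ y) := by simpa using h.dotProduct_mulVec_nonneg y
  linarith

/-- **ℓ∞ perturbation bound for the clipped optimistic value class.**
With `f_i(s) := min{ max_a ( wᵢᵀ φ(s,a) + r(s,a) + βᵢ ‖φ(s,a)‖_{Λᵢ⁻¹} ), M }` for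
feature maps bounded by `1`, `0 ≤ βᵢ`, `β₂ ≤ B`, and symmetric `Λᵢ ⪰ I`, we have
`|f₁(s) − f₂(s)| ≤ ‖w₁ − w₂‖₂ + |β₁ − β₂| + B √(‖Λ₁⁻¹ − Λ₂⁻¹‖_op)` for every `s`. -/
theorem clipped_value_class_perturbation
    {S Act : Type*} [Fintype Act] [Nonempty Act]
    {d : ℕ} (hd : 1 ≤ d)
    (φ : S → Act → Fin d → ℝ)
    (hφ : ∀ s a, Real.sqrt (∑ i, φ s a i ^ 2) ≤ 1)
    (r : S → Act → ℝ) (M B : ℝ)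
    (w₁ w₂ : Fin d → ℝ) (β₁ β₂ : ℝ)
    (hβ₁ : 0 ≤ β₁) (hβ₂ : 0 ≤ β₂) (hβ₂B : β₂ ≤ B)
    (Λ₁ Λ₂ : Matrix (Fin d) (Fin d) ℝ)
    (hΛ₁s : Λ₁.IsSymm) (hΛ₂s : Λ₂.IsSymm)
    (hΛ₁ : (Λ₁ - 1).PosSemidef) (hΛ₂ : (Λ₂ - 1).PosSemidef)
    (s : S) :
    |min (Finset.univ.sup' Finset.univ_nonempty (fun a : Act =>
            w₁ ⬝ᵥ φ s a + r s a + β₁ * Real.sqrt (φ s a ⬝ᵥ (Λ₁⁻¹).mulVec (φ s a)))) M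
      - min (Finset.univ.sup' Finset.univ_nonempty (fun a : Act =>
            w₂ ⬝ᵥ φ s a + r s a + β₂ * Real.sqrt (φ s a ⬝ᵥ (Λ₂⁻¹).mulVec (φ s a)))) M|
      ≤ Real.sqrt (∑ i, (w₁ i - w₂ i) ^ 2) + |β₁ - β₂|
        + B * Real.sqrt ‖Matrix.toEuclideanCLM (𝕜 := ℝ) (Λ₁⁻¹ - Λ₂⁻¹)‖ := by
  set C : ℝ := Real.sqrt (∑ i, (w₁ i - w₂ i) ^ 2) + |β₁ - β₂|
      + B * Real.sqrt ‖Matrix.toEuclideanCLM (𝕜 := ℝ) (Λ₁⁻¹ - Λ₂⁻¹)‖ with hC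
  have hB : 0 ≤ B := hβ₂.trans hβ₂B
  -- Step 1: reduce min to sup'
  have hmin : ∀ x y : ℝ, |min x M - min y M| ≤ |x - y| := by
    intro x y
    refine (abs_min_sub_min_le_max x M y M).trans ?_
    simp
  refine (hmin _ _).trans ?_
  -- Step 2: reduce sup' to pointwise
  refine aux_abs_sup'_sub_sup' _ _ _ _ fun a _ => ?_
  set ψ := φ s a with hψ
  have hψ1 : ∑ i, ψ i ^ 2 ≤ 1 := by
    have h0 : 0 ≤ ∑ i, ψ i ^ 2 := Finset.sum_nonneg fun i _ => sq_nonneg _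
    have h1 : Real.sqrt (∑ i, ψ i ^ 2) ≤ 1 := by rw [hψ]; exact hφ s a
    nlinarith [Real.sq_sqrt h0, Real.sqrt_nonneg (∑ i, ψ i ^ 2)]
  have hψdot : ψ ⬝ᵥ ψ ≤ 1 := by
    refine le_trans (le_of_eq ?_) hψ1
    simp [dotProduct, sq]
  -- quadratic forms
  set q₁ : ℝ := ψ ⬝ᵥ (Λ₁⁻¹) *ᵥ ψ with hq₁
  set q₂ : ℝ := ψ ⬝ᵥ (Λ₂⁻¹) *ᵥ ψ with hq₂
  have hq₁0 : 0 ≤ q₁ := by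
    simpa using ((aux_posDef hΛ₁s hΛ₁).inv.posSemidef).dotProduct_mulVec_nonneg ψ
  have hq₂0 : 0 ≤ q₂ := by
    simpa using ((aux_posDef hΛ₂s hΛ₂).inv.posSemidef).dotProduct_mulVec_nonneg ψ
  have hq₁1 : q₁ ≤ 1 := (aux_quad_le hΛ₁s hΛ₁ ψ).trans hψdot
  -- the norm bound for the quadratic form difference
  set T := Matrix.toEuclideanCLM (𝕜 := ℝ) (Λ₁⁻¹ - Λ₂⁻¹) with hT
  have hqdiff : |q₁ - q₂| ≤ ‖T‖ := by
    set x : EuclideanSpace ℝ (Fin d) := (WithLp.equiv 2 _).symm ψ with hx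
    have hxnorm : ‖x‖ ≤ 1 := by
      rw [EuclideanSpace.norm_eq]
      refine le_trans (le_of_eq ?_) (hφ s a)
      congr 1
      refine Finset.sum_congr rfl fun i _ => ?_
      simp [hx, hψ, Real.norm_eq_abs, sq_abs]
    have happ : T x = (WithLp.equiv 2 _).symm ((Λ₁⁻¹ - Λ₂⁻¹) *ᵥ ψ) :=
      Matrix.toEuclideanCLM_toLp _ ψ
    have hinner : (inner ℝ x (T x) : ℝ) = q₁ - q₂ := by
      rw [happ]
      simp only [PiLp.inner_apply, RCLike.inner_apply, starRingEnd_apply, star_trivial]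
      rw [hq₁, hq₂]
      simp only [hx, WithLp.equiv_symm_apply]
      rw [← dotProduct_sub]
      simp only [Matrix.sub_mulVec]
      simp [dotProduct, mul_comm]
    have hcs : |(inner ℝ x (T x) : ℝ)| ≤ ‖x‖ * ‖T x‖ := abs_real_inner_le_norm x (T x)
    have hop : ‖T x‖ ≤ ‖T‖ * ‖x‖ := T.le_opNorm x
    have hx0 : 0 ≤ ‖x‖ := norm_nonneg x
    have hT0 : 0 ≤ ‖T‖ := norm_nonneg T
    calc |q₁ - q₂| = |(inner ℝ x (T x) : ℝ)| := by rw [hinner]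
      _ ≤ ‖x‖ * ‖T x‖ := hcs
      _ ≤ 1 * ‖T x‖ := mul_le_mul_of_nonneg_right hxnorm (norm_nonneg _)
      _ = ‖T x‖ := one_mul _
      _ ≤ ‖T‖ * ‖x‖ := hop
      _ ≤ ‖T‖ * 1 := mul_le_mul_of_nonneg_left hxnorm hT0
      _ = ‖T‖ := mul_one _
  -- assembling the pointwise bound
  have h1 : |w₁ ⬝ᵥ ψ - w₂ ⬝ᵥ ψ| ≤ Real.sqrt (∑ i, (w₁ i - w₂ i) ^ 2) := by
    have : w₁ ⬝ᵥ ψ - w₂ ⬝ᵥ ψ = ∑ i, (w₁ i - w₂ i) * ψ i := by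
      simp [dotProduct, sub_mul, Finset.sum_sub_distrib]
    rw [this]
    refine Real.abs_le_sqrt ?_
    calc (∑ i, (w₁ i - w₂ i) * ψ i) ^ 2
        ≤ (∑ i, (w₁ i - w₂ i) ^ 2) * ∑ i, ψ i ^ 2 :=
          Finset.sum_mul_sq_le_sq_mul_sq _ _ _
      _ ≤ (∑ i, (w₁ i - w₂ i) ^ 2) * 1 := by
          have : 0 ≤ ∑ i, (w₁ i - w₂ i) ^ 2 := Finset.sum_nonneg fun i _ => sq_nonneg _
          nlinarith
      _ = ∑ i, (w₁ i - w₂ i) ^ 2 := mul_one _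
  have hsq1 : Real.sqrt q₁ ≤ 1 := by
    rw [show (1:ℝ) = Real.sqrt 1 by simp]
    exact Real.sqrt_le_sqrt hq₁1
  have h2 : |β₁ * Real.sqrt q₁ - β₂ * Real.sqrt q₂|
      ≤ |β₁ - β₂| + B * Real.sqrt ‖T‖ := by
    have hdecomp : β₁ * Real.sqrt q₁ - β₂ * Real.sqrt q₂
        = (β₁ - β₂) * Real.sqrt q₁ + β₂ * (Real.sqrt q₁ - Real.sqrt q₂) := by ring
    have ha : |(β₁ - β₂) * Real.sqrt q₁| ≤ |β₁ - β₂| := by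
      rw [abs_mul, abs_of_nonneg (Real.sqrt_nonneg _)]
      nlinarith [abs_nonneg (β₁ - β₂)]
    have hb : |β₂ * (Real.sqrt q₁ - Real.sqrt q₂)| ≤ B * Real.sqrt ‖T‖ := by
      rw [abs_mul, abs_of_nonneg hβ₂]
      have hstep : |Real.sqrt q₁ - Real.sqrt q₂| ≤ Real.sqrt ‖T‖ :=
        (aux_abs_sqrt_sub_sqrt hq₁0 hq₂0).trans (Real.sqrt_le_sqrt hqdiff)
      have := Real.sqrt_nonneg ‖T‖
      nlinarith [abs_nonneg (Real.sqrt q₁ - Real.sqrt q₂)]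
    calc |β₁ * Real.sqrt q₁ - β₂ * Real.sqrt q₂|
        ≤ |(β₁ - β₂) * Real.sqrt q₁| + |β₂ * (Real.sqrt q₁ - Real.sqrt q₂)| := by
          rw [hdecomp]; exact abs_add_le _ _
      _ ≤ |β₁ - β₂| + B * Real.sqrt ‖T‖ := add_le_add ha hb
  calc |(w₁ ⬝ᵥ ψ + r s a + β₁ * Real.sqrt q₁) - (w₂ ⬝ᵥ ψ + r s a + β₂ * Real.sqrt q₂)|
      = |(w₁ ⬝ᵥ ψ - w₂ ⬝ᵥ ψ) + (β₁ * Real.sqrt q₁ - β₂ * Real.sqrt q₂)| := by ring_nf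
    _ ≤ |w₁ ⬝ᵥ ψ - w₂ ⬝ᵥ ψ| + |β₁ * Real.sqrt q₁ - β₂ * Real.sqrt q₂| := abs_add_le _ _
    _ ≤ C := by rw [hC]; linarith [h1, h2]
end
end

section
/- (Almost-optimism of clipped optimistic value iteration under average-case misspecification; Lemma lsvi-optimism of the paper.) Let S be a finite state space, 𝒜 a finite action set, H ∈ ℕ, and d₀ an initial distribution on S. Let P* be a transition model and r = (r_h) a reward with r_h(s,a) ∈ [0,1] for all h,s,a; let Q*_h, V*_h be the optimal value functions (V*_H ≡ 0, Q*_h(s,a) = r_h(s,a) + Σ_{s'} P*_h(s'|s,a) V*_{h+1}(s'), V*_h(s) = max_a Q*_h(s,a)) and let π* be a deterministic policy that is greedy with respect to Q*. Let M_V ≥ H, β ≥ 0, ι ≥ 0, let b_h : S×𝒜 → [0,∞) be arbitrary nonnegative 'bonus' functions, and let P̂_h : S×𝒜×S → ℝ be arbitrary real-valued functions (not necessarily probability kernels). Define V̂_H ≡ 0, Q̂_h(s,a) := r_h(s,a) + Σ_{s'} P̂_h(s'|s,a) V̂_{h+1}(s') + β·b_h(s,a), a deterministic greedy policy π̂ with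 Q̂_h(s, π̂_h(s)) = max_a Q̂_h(s,a), and V̂_h(s) := min{ max_a Q̂_h(s,a), M_V }. For a trajectory prefix τ_h = (s_0,…,s_h) define the indicator ζ_h(τ_h) := Π_{h'=0}^{h} 1[Q̂_{h'}(s_{h'}, π̂_{h'}(s_{h'})) ≤ M_V], with the convention ζ_{−1} ≡ 1. Suppose that for every h ∈ {0,…,H−1}: | E_{π*,P*}[ ( Σ_{s'} (P̂_h(s'|s_h,a_h) − P*_h(s'|s_h,a_h)) V̂_{h+1}(s') ) · ζ_h(τ_h) ] | ≤ β · E_{π*,P*}[ b_h(s_h,a_h) · ζ_h(τ_h) ] + ι, where E_{π*,P*} is over the trajectory generated by executing π* in P* from d₀ (so a_h = π*_h(s_h)). Then for every h ∈ {0,…,H−1}: (a) E_{π*,P*}[ (Q*_h(s_h,a_h) − Q̂_h(s_h,a_h)) · ζ_h(τ_h) ] ≤ (H−h)·ι, and (b) E_{π*,P*}[ (V*_h(s_h) − V̂_h(s_h)) · ζ_{h−1}(τ_{h−1}) ] ≤ (H−h)·ι. In particular Σ_s d₀(s)·(V*_0(s) − V̂_0(s)) ≤ H·ι. -/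
/-! Almost-optimism of clipped optimistic value iteration under average-case
misspecification. -/

noncomputable section

open Finset

variable {S Act : Type*} [Fintype S] [Fintype Act]

/-- Probability of the trajectory prefix `τ = (s_0, …, s_h)` when the deterministic
policy `π` is executed in the transition model `P` starting from `d0`. -/
def trajProb (d0 : S → ℝ) (P : ℕ → S → Act → S → ℝ) (π : ℕ → S → Act)
    (h : ℕ) (τ : Fin (h + 1) → S) : ℝ :=
  d0 (τ 0) * ∏ t : Fin h,
    P t.1 (τ t.castSucc) (π t.1 (τ t.castSucc)) (τ t.succ)

/-- The indicator `1[Q̂_t(s, π̂_t(s)) ≤ M_V]` (as a real number). -/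
def ind (Q : ℕ → S → Act → ℝ) (π : ℕ → S → Act) (MV : ℝ) (t : ℕ) (s : S) : ℝ :=
  if Q t s (π t s) ≤ MV then 1 else 0

/-- `trajProb` of a trajectory extended by one step. -/
lemma trajProb_snoc (d0 : S → ℝ) (P : ℕ → S → Act → S → ℝ) (π : ℕ → S → Act)
    (h : ℕ) (τ : Fin (h + 1) → S) (s' : S) :
    trajProb d0 P π (h+1) (Fin.snoc τ s') =
      trajProb d0 P π h τ * P h (τ (Fin.last h)) (π h (τ (Fin.last h))) s' := by
  unfold trajProb
  rw [Fin.prod_univ_castSucc]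
  have h0 : (0 : Fin (h+1+1)) = (0 : Fin (h+1)).castSucc := by simp
  rw [h0, Fin.snoc_castSucc]
  simp [Fin.snoc_castSucc, Fin.snoc_last, Fin.succ_last, Fin.succ_castSucc, -Fin.castSucc_succ]
  ring

/-- **Almost-optimism of clipped optimistic value iteration under average-case
misspecification.**  With `V̂, Q̂` the clipped optimistic backups built from an
arbitrary (not necessarily stochastic) model `P̂` and bonuses `b`, `π̂` greedy w.r.t.
`Q̂`, `π*` greedy w.r.t. `Q*`, `ζ_h(τ_h) = Π_{h'≤h} 1[Q̂_{h'}(s_{h'},π̂(s_{h'})) ≤ M_V]`,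
and assuming the average-case model-error bound along `π*`'s trajectories, we get:
(a) `E_{π*}[(Q*_h − Q̂_h)(s_h,a_h) ζ_h(τ_h)] ≤ (H−h) ι`,
(b) `E_{π*}[(V*_h − V̂_h)(s_h) ζ_{h−1}(τ_{h−1})] ≤ (H−h) ι`, and in particular
(c) `Σ_s d₀(s)(V*_0(s) − V̂_0(s)) ≤ H ι`. -/
theorem almost_optimism [Nonempty Act]
    (H : ℕ)
    (d0 : S → ℝ) (hd0 : IsDist d0)
    (Pstar : ℕ → S → Act → S → ℝ) (hPstar : ∀ h s a, IsDist (Pstar h s a))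
    (r : ℕ → S → Act → ℝ) (hr : ∀ h s a, 0 ≤ r h s a ∧ r h s a ≤ 1)
    (Qstar : ℕ → S → Act → ℝ) (Vstar : ℕ → S → ℝ)
    (hVstarH : ∀ s, Vstar H s = 0)
    (hQstar : ∀ h, h < H → ∀ s a,
      Qstar h s a = r h s a + ∑ s', Pstar h s a s' * Vstar (h + 1) s')
    (hVstar : ∀ h, h < H → ∀ s,
      Vstar h s = Finset.univ.sup' Finset.univ_nonempty (fun a => Qstar h s a))
    (πstar : ℕ → S → Act)
    (hπstar : ∀ h, h < H → ∀ s,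
      Qstar h s (πstar h s) = Finset.univ.sup' Finset.univ_nonempty (fun a => Qstar h s a))
    (MV : ℝ) (hMV : (H : ℝ) ≤ MV)
    (β ι : ℝ) (hβ : 0 ≤ β) (hι : 0 ≤ ι)
    (b : ℕ → S → Act → ℝ) (hb : ∀ h s a, 0 ≤ b h s a)
    (Phat : ℕ → S → Act → S → ℝ)
    (Qhat : ℕ → S → Act → ℝ) (Vhat : ℕ → S → ℝ)
    (hVhatH : ∀ s, Vhat H s = 0)
    (hQhat : ∀ h, h < H → ∀ s a,
      Qhat h s a = r h s a + (∑ s', Phat h s a s' * Vhat (h + 1) s') + β * b h s a)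
    (πhat : ℕ → S → Act)
    (hπhat : ∀ h, h < H → ∀ s,
      Qhat h s (πhat h s) = Finset.univ.sup' Finset.univ_nonempty (fun a => Qhat h s a))
    (hVhat : ∀ h, h < H → ∀ s,
      Vhat h s = min (Finset.univ.sup' Finset.univ_nonempty (fun a => Qhat h s a)) MV)
    (hmodel : ∀ h, h < H →
      |∑ τ : Fin (h + 1) → S, trajProb d0 Pstar πstar h τ *
          (∏ t : Fin (h + 1), ind Qhat πhat MV t.1 (τ t)) *
          (∑ s', (Phat h (τ (Fin.last h)) (πstar h (τ (Fin.last h))) s'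
                  - Pstar h (τ (Fin.last h)) (πstar h (τ (Fin.last h))) s')
              * Vhat (h + 1) s')|
        ≤ β * (∑ τ : Fin (h + 1) → S, trajProb d0 Pstar πstar h τ *
              (∏ t : Fin (h + 1), ind Qhat πhat MV t.1 (τ t)) *
              b h (τ (Fin.last h)) (πstar h (τ (Fin.last h)))) + ι) :
    (∀ h, h < H →
      ∑ τ : Fin (h + 1) → S, trajProb d0 Pstar πstar h τ *
          (∏ t : Fin (h + 1), ind Qhat πhat MV t.1 (τ t)) *
          (Qstar h (τ (Fin.last h)) (πstar h (τ (Fin.last h)))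
            - Qhat h (τ (Fin.last h)) (πstar h (τ (Fin.last h))))
        ≤ ((H - h : ℕ) : ℝ) * ι)
    ∧ (∀ h, h < H →
      ∑ τ : Fin (h + 1) → S, trajProb d0 Pstar πstar h τ *
          (∏ t : Fin h, ind Qhat πhat MV t.1 (τ t.castSucc)) *
          (Vstar h (τ (Fin.last h)) - Vhat h (τ (Fin.last h)))
        ≤ ((H - h : ℕ) : ℝ) * ι)
    ∧ (∑ s, d0 s * (Vstar 0 s - Vhat 0 s) ≤ (H : ℝ) * ι) := by
  classical
  -- abbreviations
  set A : ℕ → ℝ := fun h => ∑ τ : Fin (h + 1) → S, trajProb d0 Pstar πstar h τ *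
      (∏ t : Fin (h + 1), ind Qhat πhat MV t.1 (τ t)) *
      (Qstar h (τ (Fin.last h)) (πstar h (τ (Fin.last h)))
        - Qhat h (τ (Fin.last h)) (πstar h (τ (Fin.last h)))) with hAdef
  set B : ℕ → ℝ := fun h => ∑ τ : Fin (h + 1) → S, trajProb d0 Pstar πstar h τ *
      (∏ t : Fin h, ind Qhat πhat MV t.1 (τ t.castSucc)) *
      (Vstar h (τ (Fin.last h)) - Vhat h (τ (Fin.last h))) with hBdef
  -- basic nonnegativity facts
  have hind : ∀ t s, 0 ≤ ind Qhat πhat MV t s := by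
    intro t s; unfold ind; split_ifs <;> norm_num
  have hp : ∀ h (τ : Fin (h + 1) → S), 0 ≤ trajProb d0 Pstar πstar h τ := by
    intro h τ
    exact mul_nonneg (hd0.1 _) (Finset.prod_nonneg fun t _ => (hPstar _ _ _).1 _)
  have hz : ∀ h (τ : Fin (h + 1) → S),
      0 ≤ ∏ t : Fin h, ind Qhat πhat MV t.1 (τ t.castSucc) :=
    fun h τ => Finset.prod_nonneg fun t _ => hind _ _
  -- bound on the optimal value function
  have hVb : ∀ k h, h + k = H → ∀ s, Vstar h s ≤ (k : ℝ) := by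
    intro k
    induction k with
    | zero =>
      intro h hk s
      have : h = H := by omega
      subst this
      simp [hVstarH s]
    | succ k ih =>
      intro h hk s
      have hh : h < H := by omega
      rw [hVstar h hh]
      apply Finset.sup'_le
      intro a _
      rw [hQstar h hh]
      have h1 : (∑ s', Pstar h s a s' * Vstar (h + 1) s') ≤ ∑ s', Pstar h s a s' * (k : ℝ) := by
        apply Finset.sum_le_sum
        intro s' _
        exact mul_le_mul_of_nonneg_left (ih (h + 1) (by omega) s') ((hPstar h s a).1 s')
      have h2 : (∑ s', Pstar h s a s' * (k : ℝ)) = (k : ℝ) := by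
        rw [← Finset.sum_mul, (hPstar h s a).2, one_mul]
      have h3 := (hr h s a).2
      push_cast
      linarith
  have hVMV : ∀ h, h ≤ H → ∀ s, Vstar h s ≤ MV := by
    intro h hh s
    have h1 : Vstar h s ≤ ((H - h : ℕ) : ℝ) := hVb (H - h) h (by omega) s
    have h2 : ((H - h : ℕ) : ℝ) ≤ (H : ℝ) := by
      exact_mod_cast Nat.sub_le H h
    linarith
  -- B H = 0
  have hBH : B H = 0 := by
    rw [hBdef]
    simp only
    apply Finset.sum_eq_zero
    intro τ _
    rw [hVstarH, hVhatH]
    ring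
  -- reindexing lemma: B (h+1) as an expectation over length-h trajectories
  have reindex : ∀ h : ℕ,
      (∑ τ : Fin (h + 1 + 1) → S, trajProb d0 Pstar πstar (h + 1) τ *
          (∏ t : Fin (h + 1), ind Qhat πhat MV t.1 (τ t.castSucc)) *
          (Vstar (h + 1) (τ (Fin.last (h + 1))) - Vhat (h + 1) (τ (Fin.last (h + 1)))))
      = ∑ τ : Fin (h + 1) → S, trajProb d0 Pstar πstar h τ *
          (∏ t : Fin (h + 1), ind Qhat πhat MV t.1 (τ t)) *
          (∑ s', Pstar h (τ (Fin.last h)) (πstar h (τ (Fin.last h))) s' *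
              (Vstar (h + 1) s' - Vhat (h + 1) s')) := by
    intro h
    rw [← Fintype.sum_equiv (Fin.snocEquiv (fun _ : Fin (h + 1 + 1) => S))
      (fun q : S × (Fin (h + 1) → S) =>
        trajProb d0 Pstar πstar (h + 1) (Fin.snoc q.2 q.1) *
          (∏ t : Fin (h + 1), ind Qhat πhat MV t.1 ((Fin.snoc q.2 q.1 : Fin (h+1+1) → S) t.castSucc)) *
          (Vstar (h + 1) ((Fin.snoc q.2 q.1 : Fin (h+1+1) → S) (Fin.last (h + 1))) -
            Vhat (h + 1) ((Fin.snoc q.2 q.1 : Fin (h+1+1) → S) (Fin.last (h + 1)))))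
      _ (fun q => rfl)]
    rw [Fintype.sum_prod_type]
    rw [Finset.sum_comm]
    apply Finset.sum_congr rfl
    intro τ _
    simp only [Fin.snoc_castSucc, Fin.snoc_last, trajProb_snoc]
    rw [Finset.mul_sum]
    apply Finset.sum_congr rfl
    intro s' _
    ring
  -- step (a): A h ≤ B (h+1) + ι
  have key1 : ∀ h, h < H → A h ≤ B (h + 1) + ι := by
    intro h hh
    have hsum : ∀ s a,
        (∑ s', Pstar h s a s' * Vstar (h + 1) s') - (∑ s', Phat h s a s' * Vhat (h + 1) s')
        = (∑ s', Pstar h s a s' * (Vstar (h + 1) s' - Vhat (h + 1) s'))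
          - ∑ s', (Phat h s a s' - Pstar h s a s') * Vhat (h + 1) s' := by
      intro s a
      rw [← Finset.sum_sub_distrib, ← Finset.sum_sub_distrib]
      apply Finset.sum_congr rfl
      intro s' _
      ring
    have hexp : A h =
        (∑ τ : Fin (h + 1) → S, trajProb d0 Pstar πstar h τ *
            (∏ t : Fin (h + 1), ind Qhat πhat MV t.1 (τ t)) *
            (∑ s', Pstar h (τ (Fin.last h)) (πstar h (τ (Fin.last h))) s' *
                (Vstar (h + 1) s' - Vhat (h + 1) s')))
        - (∑ τ : Fin (h + 1) → S, trajProb d0 Pstar πstar h τ *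
            (∏ t : Fin (h + 1), ind Qhat πhat MV t.1 (τ t)) *
            (∑ s', (Phat h (τ (Fin.last h)) (πstar h (τ (Fin.last h))) s'
                    - Pstar h (τ (Fin.last h)) (πstar h (τ (Fin.last h))) s')
                * Vhat (h + 1) s'))
        - β * (∑ τ : Fin (h + 1) → S, trajProb d0 Pstar πstar h τ *
            (∏ t : Fin (h + 1), ind Qhat πhat MV t.1 (τ t)) *
            b h (τ (Fin.last h)) (πstar h (τ (Fin.last h)))) := by
      rw [hAdef]
      simp only
      rw [Finset.mul_sum, ← Finset.sum_sub_distrib, ← Finset.sum_sub_distrib]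
      apply Finset.sum_congr rfl
      intro τ _
      rw [hQstar h hh, hQhat h hh]
      have e1 := hsum (τ (Fin.last h)) (πstar h (τ (Fin.last h)))
      linear_combination (trajProb d0 Pstar πstar h τ *
        (∏ t : Fin (h + 1), ind Qhat πhat MV t.1 (τ t))) * e1
    have hT1 : (∑ τ : Fin (h + 1) → S, trajProb d0 Pstar πstar h τ *
            (∏ t : Fin (h + 1), ind Qhat πhat MV t.1 (τ t)) *
            (∑ s', Pstar h (τ (Fin.last h)) (πstar h (τ (Fin.last h))) s' *
                (Vstar (h + 1) s' - Vhat (h + 1) s'))) = B (h + 1) := by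
      rw [hBdef]
      exact (reindex h).symm
    have hmod := hmodel h hh
    have hneg := neg_abs_le (∑ τ : Fin (h + 1) → S, trajProb d0 Pstar πstar h τ *
          (∏ t : Fin (h + 1), ind Qhat πhat MV t.1 (τ t)) *
          (∑ s', (Phat h (τ (Fin.last h)) (πstar h (τ (Fin.last h))) s'
                  - Pstar h (τ (Fin.last h)) (πstar h (τ (Fin.last h))) s')
              * Vhat (h + 1) s'))
    linarith
  -- step (b): B h ≤ A h for h < H
  have key2 : ∀ h, h < H → B h ≤ A h := by
    intro h hh
    rw [hAdef, hBdef]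
    simp only
    apply Finset.sum_le_sum
    intro τ _
    rw [Fin.prod_univ_castSucc]
    simp only [Fin.coe_castSucc, Fin.val_last]
    set s := τ (Fin.last h) with hs
    have hpz : 0 ≤ trajProb d0 Pstar πstar h τ *
        ∏ t : Fin h, ind Qhat πhat MV t.1 (τ t.castSucc) :=
      mul_nonneg (hp h τ) (hz h τ)
    by_cases hc : Qhat h s (πhat h s) ≤ MV
    · have hi : ind Qhat πhat MV h s = 1 := by simp [ind, hc]
      rw [hi, mul_one]
      have h1 : Vstar h s = Qstar h s (πstar h s) := by
        rw [hVstar h hh s, ← hπstar h hh s]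
      have h3 : Qhat h s (πstar h s) ≤
          Finset.univ.sup' Finset.univ_nonempty (fun a => Qhat h s a) :=
        Finset.le_sup' _ (Finset.mem_univ _)
      have h4 : Finset.univ.sup' Finset.univ_nonempty (fun a => Qhat h s a) ≤ MV := by
        rw [← hπhat h hh s]; exact hc
      have h5 : Qhat h s (πstar h s) ≤ Vhat h s := by
        rw [hVhat h hh s]; exact le_min h3 (h3.trans h4)
      have hΔ : Vstar h s - Vhat h s ≤ Qstar h s (πstar h s) - Qhat h s (πstar h s) := by
        linarith
      exact mul_le_mul_of_nonneg_left hΔ hpz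
    · have hi : ind Qhat πhat MV h s = 0 := by simp [ind, hc]
      rw [hi, mul_zero, mul_zero, zero_mul]
      have h6 : MV ≤ Finset.univ.sup' Finset.univ_nonempty (fun a => Qhat h s a) := by
        rw [← hπhat h hh s]; linarith [not_le.mp hc]
      have h7 : Vhat h s = MV := by
        rw [hVhat h hh s]; exact min_eq_right h6
      have h8 : Vstar h s ≤ MV := hVMV h (le_of_lt hh) s
      have hΔ : Vstar h s - Vhat h s ≤ 0 := by rw [h7]; linarith
      exact mul_nonpos_of_nonneg_of_nonpos hpz hΔ
  -- main downward induction
  have main : ∀ k h, h + k = H → B h ≤ (k : ℝ) * ι := by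
    intro k
    induction k with
    | zero =>
      intro h hk
      have : h = H := by omega
      subst this
      simp [hBH]
    | succ k ih =>
      intro h hk
      have hh : h < H := by omega
      have c1 := key2 h hh
      have c2 := key1 h hh
      have c3 := ih (h + 1) (by omega)
      push_cast
      linarith
  have partA : ∀ h, h < H → A h ≤ ((H - h : ℕ) : ℝ) * ι := by
    intro h hh
    have c2 := key1 h hh
    have c3 := main (H - (h + 1)) (h + 1) (by omega)
    have hcast : ((H - h : ℕ) : ℝ) = ((H - (h + 1) : ℕ) : ℝ) + 1 := by
      have : H - h = (H - (h + 1)) + 1 := by omega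
      rw [this]; push_cast; ring
    rw [hcast]
    linarith
  have partB : ∀ h, h < H → B h ≤ ((H - h : ℕ) : ℝ) * ι := by
    intro h hh
    exact (key2 h hh).trans (partA h hh)
  refine ⟨partA, partB, ?_⟩
  -- part (c)
  by_cases hH : H = 0
  · subst hH
    have : (∑ s, d0 s * (Vstar 0 s - Vhat 0 s)) = 0 := by
      apply Finset.sum_eq_zero
      intro s _
      rw [hVstarH, hVhatH]
      ring
    rw [this]
    positivity
  · have h0 : 0 < H := Nat.pos_of_ne_zero hH
    have hB0 := partB 0 h0
    have hEq : (∑ s, d0 s * (Vstar 0 s - Vhat 0 s)) = B 0 := by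
      rw [hBdef]
      simp only
      rw [← Fintype.sum_equiv (Equiv.funUnique (Fin 1) S)
        (fun τ : Fin 1 → S => d0 (τ 0) * (Vstar 0 (τ 0) - Vhat 0 (τ 0))) _ (fun τ => rfl)]
      apply Finset.sum_congr rfl
      intro τ _
      simp [trajProb, Fin.last]
    rw [hEq]
    have : ((H - 0 : ℕ) : ℝ) = (H : ℝ) := by norm_num
    rw [← this]
    exact hB0
end
end
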